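/- For every r ≥ 0, if y^i, y^f ∈ U^e_L(N) then Z^N_{2r}(y^i → y^f) = V(y^i) · ((T_N^{e·e})^r)_{y^i,y^f}, and if y^i, y^f ∈ U^o_L(N) then Z^N_{2r}(y^i → y^f) = V(y^i) · ((T_N^{o·o})^r)_{y^i,y^f}, where V(y^i) = ∏_{α=1}^N v(y^i_α). -/

import Mathlib

open Finset BigOperators
open scoped Classical

noncomputable section

/-- The odd sites of the strip: `{y : 1 ≤ y ≤ L, y odd}`. -/
def SetO (L : ℤ) : Finset ℤ := (Finset.Icc 1 L).filter (fun y => Odd y)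

/-- The even sites of the strip: `{y : 0 ≤ y ≤ L, y even}`. -/
def SetE (L : ℤ) : Finset ℤ := (Finset.Icc 0 L).filter (fun y => Even y)

/-- Parity-indexed site sets: `true ↦ odd`, `false ↦ even`. -/
def Sp (L : ℤ) : Bool → Finset ℤ := fun p => if p then SetO L else SetE L

/-- Strictly increasing `N`-tuples with entries in `S`. -/
def UU {α : Type*} [LinearOrder α] (S : Finset α) (N : ℕ) : Finset (Fin N → α) :=
  (Fintype.piFinset (fun _ => S)).filter (fun y => ∀ i j : Fin N, i < j → y i < y j)

/-- One-step transfer matrix entry: `w y y'` when `|y - y'| = 1`, and `0` otherwise. -/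
def T1 (w : ℤ → ℤ → ℂ) (y y' : ℤ) : ℂ := if |y - y'| = 1 then w y y' else 0

/-- `N`-walk transfer matrix entry: product of one-step entries. -/
def TN (w : ℤ → ℤ → ℂ) {N : ℕ} (y y' : Fin N → ℤ) : ℂ := ∏ i, T1 w (y i) (y' i)

/-- Powers of a matrix indexed by a finite set `S`. -/
def matPow {α : Type*} [DecidableEq α] (S : Finset α) (M : α → α → ℂ) : ℕ → α → α → ℂ
  | 0 => fun y y' => if y = y' then 1 else 0
  | r + 1 => fun y y' => ∑ z ∈ S, matPow S M r y z * M z y'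

/-- Weight of a family of `N` walks of length `t`. -/
def walkWeight (w : ℤ → ℤ → ℂ) (v : ℤ → ℂ) {N t : ℕ} (y : Fin N → Fin (t + 1) → ℤ) : ℂ :=
  (∏ j, v (y j 0)) * ∏ m : Fin t, ∏ j, w (y j m.castSucc) (y j m.succ)

/-- The constraints on families of non-intersecting walks in the strip `0 ≤ y ≤ L`. -/
def stripCond (L : ℤ) {N t : ℕ} (yi yf : Fin N → ℤ) (y : Fin N → Fin (t + 1) → ℤ) : Prop :=
  (∀ j, y j 0 = yi j) ∧ (∀ j, y j (Fin.last t) = yf j) ∧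
    (∀ j m, 0 ≤ y j m ∧ y j m ≤ L) ∧
    (∀ j, ∀ m : Fin t, y j m.succ = y j m.castSucc + 1 ∨ y j m.succ = y j m.castSucc - 1) ∧
    (∀ m, ∀ i j : Fin N, i < j → y i m < y j m)

/-- The `N`-walk strip generating function `Z^N_t(y^i → y^f)`. -/
def Zgen (L : ℤ) (w : ℤ → ℤ → ℂ) (v : ℤ → ℂ) (N t : ℕ) (yi yf : Fin N → ℤ) : ℂ :=
  ∑ y ∈ (Fintype.piFinset
      (fun _ : Fin N => Fintype.piFinset (fun _ : Fin (t + 1) => Finset.Icc 0 L))).filter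
        (stripCond L yi yf), walkWeight w v y

/-- The constraints on families of non-intersecting walks with a single wall `y ≥ 0`. -/
def barCond {N t : ℕ} (yi yf : Fin N → ℤ) (y : Fin N → Fin (t + 1) → ℤ) : Prop :=
  (∀ j, y j 0 = yi j) ∧ (∀ j, y j (Fin.last t) = yf j) ∧
    (∀ j m, 0 ≤ y j m) ∧
    (∀ j, ∀ m : Fin t, y j m.succ = y j m.castSucc + 1 ∨ y j m.succ = y j m.castSucc - 1) ∧
    (∀ m, ∀ i j : Fin N, i < j → y i m < y j m)

/-- The one-wall `N`-walk generating function `Z̄^N_t(y^i → y^f)`. -/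
def Zbar (w : ℤ → ℤ → ℂ) (v : ℤ → ℂ) (N t : ℕ) (yi yf : Fin N → ℤ) : ℂ :=
  ∑ᶠ (y : Fin N → Fin (t + 1) → ℤ) (_ : barCond yi yf y), walkWeight w v y

/-- The Bethe Ansatz determinant built from a family of one-walk vectors. -/
def BA {K X : Type*} {N : ℕ} (φ : K → X → ℂ) (k : Fin N → K) (y : Fin N → X) : ℂ :=
  ∑ σ : Equiv.Perm (Fin N), ((Equiv.Perm.sign σ : ℤ) : ℂ) * ∏ a, φ (k (σ a)) (y a)

end

namespace ZP
open Finset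

lemma mem_UU_iff {α : Type*} [LinearOrder α] {S : Finset α} {N : ℕ} {y : Fin N → α} :
    y ∈ UU S N ↔ (∀ i, y i ∈ S) ∧ ∀ i j : Fin N, i < j → y i < y j := by
  simp [UU, Fintype.mem_piFinset]

lemma UU_mono {α : Type*} [LinearOrder α] {S S' : Finset α} (h : S ⊆ S') {N : ℕ} :
    UU S N ⊆ UU S' N := by
  intro y hy
  rw [mem_UU_iff] at hy ⊢
  exact ⟨fun i => h (hy.1 i), hy.2⟩

lemma abs_sub_eq_one {a b : ℤ} (h : |a - b| = 1) : a = b + 1 ∨ a = b - 1 := by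
  rcases (abs_eq (by norm_num : (0:ℤ) ≤ 1)).mp h with h' | h' <;> omega

lemma TN_ne_zero {w : ℤ → ℤ → ℂ} {N : ℕ} {y z : Fin N → ℤ} (h : TN w y z ≠ 0) (j : Fin N) :
    |y j - z j| = 1 := by
  rw [TN, Finset.prod_ne_zero_iff] at h
  have := h j (mem_univ j)
  rw [T1] at this
  by_contra hc
  simp [hc] at this

/-- chain over sequences of configurations -/
noncomputable def chainS (w : ℤ → ℤ → ℂ) {N : ℕ} (S : Finset (Fin N → ℤ)) (t : ℕ)
    (yi yf : Fin N → ℤ) : ℂ :=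
  ∑ c ∈ (Fintype.piFinset (fun _ : Fin (t + 1) => S)).filter
      (fun c => c 0 = yi ∧ c (Fin.last t) = yf),
    ∏ m : Fin t, TN w (c m.castSucc) (c m.succ)

lemma chainS_zero (w : ℤ → ℤ → ℂ) {N : ℕ} (S : Finset (Fin N → ℤ)) (yi yf : Fin N → ℤ) :
    chainS w S 0 yi yf = if yi = yf ∧ yi ∈ S then 1 else 0 := by
  rw [chainS]
  have hlast : (Fin.last 0 : Fin 1) = 0 := rfl
  by_cases h : yi = yf ∧ yi ∈ S
  · rw [if_pos h]
    have hset : (Fintype.piFinset (fun _ : Fin 1 => S)).filter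
        (fun c => c 0 = yi ∧ c (Fin.last 0) = yf) = {fun _ => yi} := by
      ext c
      simp only [mem_filter, Fintype.mem_piFinset, mem_singleton, hlast]
      constructor
      · rintro ⟨-, h1, -⟩
        funext i
        rw [show i = 0 from Subsingleton.elim i 0, h1]
      · rintro rfl
        exact ⟨fun _ => h.2, rfl, h.1⟩
    rw [hset]
    simp
  · rw [if_neg h]
    apply Finset.sum_eq_zero
    intro c hc
    exfalso
    simp only [mem_filter, Fintype.mem_piFinset, hlast] at hc
    exact h ⟨by rw [← hc.2.1, hc.2.2], by rw [← hc.2.1]; exact hc.1 0⟩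

lemma chainS_succ (w : ℤ → ℤ → ℂ) {N : ℕ} (S : Finset (Fin N → ℤ)) (t : ℕ)
    (yi yf : Fin N → ℤ) (hyi : yi ∈ S) :
    chainS w S (t + 1) yi yf = ∑ z ∈ S, TN w yi z * chainS w S t z yf := by
  have hsl : (Fin.last (t + 1)) = (Fin.last t).succ := rfl
  have hgroup : ∀ z ∈ S,
      TN w yi z * chainS w S t z yf =
      ∑ c ∈ ((Fintype.piFinset (fun _ : Fin (t + 1) => S)).filter
          (fun c => c (Fin.last t) = yf)).filter (fun c => c 0 = z),
        TN w yi (c 0) * ∏ m : Fin t, TN w (c m.castSucc) (c m.succ) := by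
    intro z _
    rw [chainS, Finset.mul_sum]
    apply Finset.sum_congr
    · ext c
      simp only [mem_filter, Fintype.mem_piFinset]
      tauto
    · intro c hc
      rw [(Finset.mem_filter.mp hc).2]
  rw [Finset.sum_congr rfl hgroup,
    Finset.sum_fiberwise_of_maps_to (fun c hc => by
      simp only [mem_filter, Fintype.mem_piFinset] at hc
      exact hc.1 0)]
  rw [chainS]
  apply Finset.sum_nbij' (fun c => fun m : Fin (t + 1) => c m.succ)
    (fun c => Fin.cons yi c)
  · intro c hc
    simp only [mem_filter, Fintype.mem_piFinset] at hc ⊢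
    refine ⟨fun m => hc.1 m.succ, ?_⟩
    rw [← hsl]
    exact hc.2.2
  · intro c hc
    simp only [mem_filter, Fintype.mem_piFinset] at hc ⊢
    refine ⟨fun m => ?_, Fin.cons_zero _ _, ?_⟩
    · rcases Fin.eq_zero_or_eq_succ m with rfl | ⟨m', rfl⟩
      · simpa using hyi
      · simpa using hc.1 m'
    · rw [hsl, Fin.cons_succ]
      exact hc.2
  · intro c hc
    simp only [mem_filter] at hc
    funext m
    rcases Fin.eq_zero_or_eq_succ m with rfl | ⟨m', rfl⟩
    · rw [Fin.cons_zero, hc.2.1]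
    · rw [Fin.cons_succ]
  · intro c _
    funext m
    rw [Fin.cons_succ]
  · intro c hc
    simp only [mem_filter] at hc
    rw [Fin.prod_univ_succ]
    beta_reduce
    rw [Fin.castSucc_zero, hc.2.1]
    simp

lemma matPow_succ_left {α : Type*} [DecidableEq α] (S : Finset α) (M : α → α → ℂ) (r : ℕ)
    {y y' : α} (hy : y ∈ S) (hy' : y' ∈ S) :
    matPow S M (r + 1) y y' = ∑ z ∈ S, M y z * matPow S M r z y' := by
  induction r generalizing y' with
  | zero =>
    show (∑ z ∈ S, matPow S M 0 y z * M z y') = _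
    rw [Finset.sum_eq_single y (fun z _ hz => by simp [matPow, Ne.symm hz])
      (fun h => absurd hy h)]
    rw [Finset.sum_eq_single y' (fun z _ hz => by simp [matPow, hz]) (fun h => absurd hy' h)]
    simp [matPow]
  | succ r ih =>
    show (∑ z ∈ S, matPow S M (r+1) y z * M z y') = _
    have : ∀ z ∈ S, matPow S M (r+1) y z * M z y' =
        ∑ u ∈ S, M y u * matPow S M r u z * M z y' := by
      intro z hz
      rw [ih hz, Finset.sum_mul]
    rw [Finset.sum_congr rfl this, Finset.sum_comm]
    apply Finset.sum_congr rfl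
    intro u _
    show _ = M y u * matPow S M (r+1) u y'
    show _ = M y u * ∑ z ∈ S, matPow S M r u z * M z y'
    rw [Finset.mul_sum]
    apply Finset.sum_congr rfl
    intro z _
    ring

lemma chainS_eq_matPow (L : ℤ) (w : ℤ → ℤ → ℂ) {N : ℕ} (Sa Sb : Finset ℤ)
    (hSa : Sa ⊆ Finset.Icc 0 L) (hSb : Sb ⊆ Finset.Icc 0 L)
    (h1 : ∀ a b : ℤ, a ∈ Sa → b ∈ Finset.Icc 0 L → |a - b| = 1 → b ∈ Sb)
    (h2 : ∀ a b : ℤ, a ∈ Sb → b ∈ Finset.Icc 0 L → |a - b| = 1 → b ∈ Sa)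
    (r : ℕ) (yi yf : Fin N → ℤ) (hyi : yi ∈ UU Sa N) (hyf : yf ∈ UU Sa N) :
    chainS w (UU (Finset.Icc 0 L) N) (2 * r) yi yf =
      matPow (UU Sa N) (fun y y' => ∑ z ∈ UU Sb N, TN w y z * TN w z y') r yi yf := by
  induction r generalizing yi with
  | zero =>
    rw [show (2 * 0 : ℕ) = 0 from rfl, chainS_zero]
    have hyi' : yi ∈ UU (Finset.Icc 0 L) N := UU_mono hSa hyi
    show _ = if yi = yf then 1 else 0
    by_cases h : yi = yf
    · subst h
      simp [hyi']
    · simp [h]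
  | succ r ih =>
    have hyi' : yi ∈ UU (Finset.Icc 0 L) N := UU_mono hSa hyi
    have key : ∀ z ∈ UU Sb N,
        chainS w (UU (Finset.Icc 0 L) N) (2 * r + 1) z yf
          = ∑ u ∈ UU Sa N, TN w z u *
              matPow (UU Sa N) (fun y y' => ∑ x ∈ UU Sb N, TN w y x * TN w x y') r u yf := by
      intro z hz
      rw [chainS_succ w _ _ _ _ (UU_mono hSb hz)]
      have hvan : ∀ u ∈ UU (Finset.Icc 0 L) N, u ∉ UU Sa N →
          TN w z u * chainS w (UU (Finset.Icc 0 L) N) (2 * r) u yf = 0 := by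
        intro u hu hu2
        rcases eq_or_ne (TN w z u) 0 with h0 | h0
        · rw [h0, zero_mul]
        · exact absurd (mem_UU_iff.mpr
            ⟨fun j => h2 (z j) (u j) ((mem_UU_iff.mp hz).1 j) ((mem_UU_iff.mp hu).1 j)
              (TN_ne_zero h0 j), (mem_UU_iff.mp hu).2⟩) hu2
      rw [← Finset.sum_subset (UU_mono hSa) hvan]
      exact Finset.sum_congr rfl (fun u hu => by rw [ih u hu])
    rw [show 2 * (r + 1) = (2 * r + 1) + 1 by ring, chainS_succ w _ _ _ _ hyi']
    have hvan : ∀ z ∈ UU (Finset.Icc 0 L) N, z ∉ UU Sb N →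
        TN w yi z * chainS w (UU (Finset.Icc 0 L) N) (2 * r + 1) z yf = 0 := by
      intro z hz hz2
      rcases eq_or_ne (TN w yi z) 0 with h0 | h0
      · rw [h0, zero_mul]
      · exact absurd (mem_UU_iff.mpr
          ⟨fun j => h1 (yi j) (z j) ((mem_UU_iff.mp hyi).1 j) ((mem_UU_iff.mp hz).1 j)
            (TN_ne_zero h0 j), (mem_UU_iff.mp hz).2⟩) hz2
    rw [← Finset.sum_subset (UU_mono hSb) hvan]
    rw [Finset.sum_congr rfl (fun z hz => by rw [key z hz])]
    rw [matPow_succ_left _ _ r hyi hyf]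
    simp only [Finset.mul_sum, Finset.sum_mul, mul_assoc]
    exact Finset.sum_comm

lemma Zgen_eq_chain (L : ℤ) (w : ℤ → ℤ → ℂ) (v : ℤ → ℂ) (N t : ℕ) (yi yf : Fin N → ℤ) :
    Zgen L w v N t yi yf =
      (∏ a, v (yi a)) * chainS w (UU (Finset.Icc 0 L) N) t yi yf := by
  classical
  set A := (Fintype.piFinset (fun _ : Fin (t + 1) => UU (Finset.Icc 0 L) N)).filter
      (fun c => c 0 = yi ∧ c (Fin.last t) = yf) with hA
  set B := A.filter (fun c => ∀ (m : Fin t) (j : Fin N),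
      c m.succ j = c m.castSucc j + 1 ∨ c m.succ j = c m.castSucc j - 1) with hB
  have hvan : ∀ c ∈ A, c ∉ B →
      (∏ a, v (yi a)) * ∏ m : Fin t, TN w (c m.castSucc) (c m.succ) = 0 := by
    intro c hcA hcB
    have hstep : ¬ ∀ (m : Fin t) (j : Fin N),
        c m.succ j = c m.castSucc j + 1 ∨ c m.succ j = c m.castSucc j - 1 := by
      intro h
      exact hcB (Finset.mem_filter.mpr ⟨hcA, h⟩)
    push_neg at hstep
    obtain ⟨m, j, hm1, hm2⟩ := hstep
    apply mul_eq_zero_of_right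
    apply Finset.prod_eq_zero (Finset.mem_univ m)
    rw [TN]
    apply Finset.prod_eq_zero (Finset.mem_univ j)
    rw [T1, if_neg]
    intro habs
    rcases abs_sub_eq_one habs with h' | h' <;> omega
  have hsplit : ∑ c ∈ B, ((∏ a, v (yi a)) * ∏ m : Fin t, TN w (c m.castSucc) (c m.succ))
      = ∑ c ∈ A, ((∏ a, v (yi a)) * ∏ m : Fin t, TN w (c m.castSucc) (c m.succ)) :=
    Finset.sum_subset (Finset.filter_subset _ _) hvan
  rw [Zgen, chainS, ← hA, Finset.mul_sum, ← hsplit]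
  apply Finset.sum_nbij' (fun y => Function.swap y) (fun c => Function.swap c)
  · intro y hy
    simp only [Finset.mem_filter, Fintype.mem_piFinset] at hy
    obtain ⟨hpi, hc1, hc2, hc3, hc4, hc5⟩ := hy
    rw [hB, Finset.mem_filter, hA, Finset.mem_filter, Fintype.mem_piFinset]
    refine ⟨⟨fun m => mem_UU_iff.mpr ⟨fun j => ?_, fun i j hij => hc5 m i j hij⟩,
      funext fun j => hc1 j, funext fun j => hc2 j⟩, fun m j => hc4 j m⟩
    · rw [Finset.mem_Icc]
      exact hc3 j m
  · intro c hc
    rw [hB, Finset.mem_filter, hA, Finset.mem_filter, Fintype.mem_piFinset] at hc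
    obtain ⟨⟨hpi, hc1, hc2⟩, hstep⟩ := hc
    simp only [Finset.mem_filter, Fintype.mem_piFinset]
    exact ⟨fun j m => (mem_UU_iff.mp (hpi m)).1 j,
      fun j => congrFun hc1 j, fun j => congrFun hc2 j,
      fun j m => Finset.mem_Icc.mp ((mem_UU_iff.mp (hpi m)).1 j),
      fun j m => hstep m j,
      fun m i j hij => (mem_UU_iff.mp (hpi m)).2 i j hij⟩
  · intro y _
    rfl
  · intro c _
    rfl
  · intro y hy
    simp only [Finset.mem_filter, Fintype.mem_piFinset] at hy
    obtain ⟨hpi, hc1, hc2, hc3, hc4, hc5⟩ := hy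
    rw [walkWeight]
    congr 1
    · exact Finset.prod_congr rfl (fun j _ => by rw [hc1 j])
    · apply Finset.prod_congr rfl
      intro m _
      rw [TN]
      apply Finset.prod_congr rfl
      intro j _
      have habs : |Function.swap y m.castSucc j - Function.swap y m.succ j| = 1 := by
        show |y j m.castSucc - y j m.succ| = 1
        rcases hc4 j m with h' | h' <;> rw [h'] <;> simp
      rw [T1, if_pos habs]

lemma memO_of {L a b : ℤ} (ha : a ∈ SetE L) (hb : b ∈ Finset.Icc 0 L) (h : |a - b| = 1) :
    b ∈ SetO L := by
  simp only [SetE, SetO, Finset.mem_filter, Finset.mem_Icc, Int.even_iff, Int.odd_iff] at ha ⊢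
  rw [Finset.mem_Icc] at hb
  rcases abs_sub_eq_one h with h' | h' <;> omega

lemma memE_of {L a b : ℤ} (ha : a ∈ SetO L) (hb : b ∈ Finset.Icc 0 L) (h : |a - b| = 1) :
    b ∈ SetE L := by
  simp only [SetE, SetO, Finset.mem_filter, Finset.mem_Icc, Int.even_iff, Int.odd_iff] at ha ⊢
  rw [Finset.mem_Icc] at hb
  rcases abs_sub_eq_one h with h' | h' <;> omega

lemma SetE_subset {L : ℤ} : SetE L ⊆ Finset.Icc 0 L := Finset.filter_subset _ _

lemma SetO_subset {L : ℤ} : SetO L ⊆ Finset.Icc 0 L := by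
  intro x hx
  simp only [SetO, Finset.mem_filter, Finset.mem_Icc] at hx
  rw [Finset.mem_Icc]
  omega

end ZP


/-- the even-length generating function is a matrix element of a power of the
two-step transfer matrix, times the initial weight `V(y^i)`. -/
theorem Zgen_even_matPow (L : ℤ) (hL : Odd L) (hL1 : 1 ≤ L) (w : ℤ → ℤ → ℂ) (v : ℤ → ℂ)
    (N : ℕ) (hN : 1 ≤ N) (r : ℕ) (yi yf : Fin N → ℤ) :
    (yi ∈ UU (SetE L) N → yf ∈ UU (SetE L) N →
      Zgen L w v N (2 * r) yi yf =
        (∏ a, v (yi a)) *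
          matPow (UU (SetE L) N)
            (fun y y' => ∑ z ∈ UU (SetO L) N, TN w y z * TN w z y') r yi yf) ∧
    (yi ∈ UU (SetO L) N → yf ∈ UU (SetO L) N →
      Zgen L w v N (2 * r) yi yf =
        (∏ a, v (yi a)) *
          matPow (UU (SetO L) N)
            (fun y y' => ∑ z ∈ UU (SetE L) N, TN w y z * TN w z y') r yi yf) := by
  constructor
  · intro hyi hyf
    rw [ZP.Zgen_eq_chain]
    congr 1
    exact ZP.chainS_eq_matPow L w (SetE L) (SetO L) ZP.SetE_subset ZP.SetO_subset
      (fun a b ha hb h => ZP.memO_of ha hb h) (fun a b ha hb h => ZP.memE_of ha hb h)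
      r yi yf hyi hyf
  · intro hyi hyf
    rw [ZP.Zgen_eq_chain]
    congr 1
    exact ZP.chainS_eq_matPow L w (SetO L) (SetE L) ZP.SetO_subset ZP.SetE_subset
      (fun a b ha hb h => ZP.memE_of ha hb h) (fun a b ha hb h => ZP.memO_of ha hb h)
      r yi yf hyi hyf
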